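/- Let h(j) = a*j^2 + b*j + e with integers a > 0, e > 0, and h(j) ≥ 0 for all j ≥ 0. If a + b ≥ e, then the Hilbert depth of h is at least 2, i.e., β_k^2(h) := ∑_{j=0}^k (-1)^{k-j} C(2-j, k-j) h(j) ≥ 0 for k = 0, 1, 2. -/

import Mathlib

theorem stmt_4 (a b e : ℤ) (ha : 0 < a) (he : 0 < e)
    (h : ℕ → ℤ) (hh : ∀ j : ℕ, h j = a * j ^ 2 + b * j + e)
    (hnn : ∀ j : ℕ, 0 ≤ h j) (habe : e ≤ a + b) :
    ∀ k : ℕ, k ≤ 2 →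
      0 ≤ ∑ j ∈ Finset.range (k + 1), (-1 : ℤ) ^ (k - j) * (Nat.choose (2 - j) (k - j)) * h j := by
  intro k hk
  interval_cases k <;>
    simp [Finset.sum_range_succ, hh] <;> push_cast <;> nlinarith [hh 0, hh 1, hh 2]
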